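/- Decomposition of an accepting sequence through repeated visits to a fixed element: if (o, o') is in the relation defined by automaton α from state s_0 to final set F in interpretation I, witnessed by a minimal sequence s_0 o_0 s_1 o_1 … s_g o_g with o_0 = o, o_g = o', and e is any domain element, then letting j_1 < … < j_{n-1} be all indices 1 ≤ i < g with o_i = e (and j_0 = 0, j_n = g), the states u_{j_1}, …, u_{j_{n-1}} are pairwise distinct, and the pair (o, e) is in the relation from s_0 to u_{j_1}, (e, e) is in the relation from u_{j_i} to u_{j_{i+1}} for each 1 ≤ i < n−1, and (e, o') is in the relation from u_{j_{n-1}} to u_{j_n} with u_{j_n} ∈ F. -/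

import Mathlib

set_option autoImplicit false

namespace Paper

abbrev CN := ℕ
abbrev RN := ℕ
abbrev Ind := ℕ

structure Interp where
  Dom : Type
  nonempty : Nonempty Dom
  ind : Ind → Dom
  cn : CN → Set Dom
  rn : RN → Dom → Dom → Prop

inductive ERole where
  | name (p : RN)
  | inv (p : RN)
deriving DecidableEq

def ERole.sem (I : Interp) : ERole → I.Dom → I.Dom → Prop
  | .name p => I.rn p
  | .inv p => fun x y => I.rn p y x

def ERole.einv : ERole → ERole
  | .name p => .inv p
  | .inv p => .name p

inductive Role where
  | er (r : ERole)
  | ctest (A : CN)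
  | itest (a : Ind)
deriving DecidableEq

def Role.sem (I : Interp) : Role → I.Dom → I.Dom → Prop
  | .er r => r.sem I
  | .ctest A => fun x y => x = y ∧ x ∈ I.cn A
  | .itest a => fun x y => x = I.ind a ∧ y = I.ind a

inductive NRE where
  | role (σ : Role)
  | comp (E₁ E₂ : NRE)
  | union (E₁ E₂ : NRE)
  | star (E : NRE)
  | test (E : NRE)

def NRE.sem (I : Interp) : NRE → I.Dom → I.Dom → Prop
  | .role σ => σ.sem I
  | .comp E₁ E₂ => fun x z => ∃ y, E₁.sem I x y ∧ E₂.sem I y z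
  | .union E₁ E₂ => fun x y => E₁.sem I x y ∨ E₂.sem I x y
  | .star E => Relation.ReflTransGen (E.sem I)
  | .test E => fun x y => x = y ∧ ∃ z, E.sem I x z

def Role.NoITest : Role → Prop
  | .itest _ => False
  | _ => True

def NRE.NoITest : NRE → Prop
  | .role σ => σ.NoITest
  | .comp E₁ E₂ => E₁.NoITest ∧ E₂.NoITest
  | .union E₁ E₂ => E₁.NoITest ∧ E₂.NoITest
  | .star E => E.NoITest
  | .test E => E.NoITest

def NRE.NestFree : NRE → Prop
  | .role _ => True
  | .comp E₁ E₂ => E₁.NestFree ∧ E₂.NestFree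
  | .union E₁ E₂ => E₁.NestFree ∧ E₂.NestFree
  | .star E => E.NestFree
  | .test _ => False

structure NNFA where
  n : ℕ
  St : Fin n → Type
  init : ∀ i, St i
  final : ∀ i, Set (St i)
  transRole : ∀ i, St i → Role → St i → Prop
  transTest : ∀ i, St i → Fin n → St i → Prop
  test_gt : ∀ i s j s', transTest i s j s' → i < j

inductive NNFA.Accept (M : NNFA) (I : Interp) :
    ∀ i : Fin M.n, M.St i → Set (M.St i) → I.Dom → I.Dom → Prop where
  | refl {i : Fin M.n} {s : M.St i} {F : Set (M.St i)} {o : I.Dom} :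
      s ∈ F → NNFA.Accept M I i s F o o
  | step {i : Fin M.n} {s s' : M.St i} {F : Set (M.St i)} {σ : Role} {o o' o'' : I.Dom} :
      M.transRole i s σ s' → σ.sem I o o' → NNFA.Accept M I i s' F o' o'' →
      NNFA.Accept M I i s F o o''
  | test {i : Fin M.n} {s s' : M.St i} {F : Set (M.St i)} {j : Fin M.n} {o o₁ o'' : I.Dom} :
      M.transTest i s j s' → NNFA.Accept M I j (M.init j) (M.final j) o o₁ →
      NNFA.Accept M I i s' F o o'' → NNFA.Accept M I i s F o o''

def NNFA.NoITest (M : NNFA) : Prop :=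
  ∀ i (s : M.St i) (a : Ind) (s' : M.St i), ¬ M.transRole i s (.itest a) s'

inductive RTree (L : Type) where
  | leaf (l : L)
  | one (l : L) (c : RTree L)
  | two (l : L) (c₁ c₂ : RTree L)

def RTree.label {L : Type} : RTree L → L
  | .leaf l => l
  | .one l _ => l
  | .two l _ _ => l

def RTree.leaves {L : Type} : RTree L → List L
  | .leaf l => [l]
  | .one _ c => c.leaves
  | .two _ c₁ c₂ => c₁.leaves ++ c₂.leaves

def NNFA.IsRun (M : NNFA) (I : Interp) : RTree ((Σ i, M.St i) × I.Dom) → Prop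
  | .leaf _ => True
  | .one l c => M.IsRun I c ∧
      ∃ (σ : Role) (s' : M.St l.1.1) (o' : I.Dom),
        M.transRole l.1.1 l.1.2 σ s' ∧ σ.sem I l.2 o' ∧ c.label = (⟨l.1.1, s'⟩, o')
  | .two l c₁ c₂ => M.IsRun I c₁ ∧ M.IsRun I c₂ ∧
      ∃ (j : Fin M.n) (s' : M.St l.1.1),
        M.transTest l.1.1 l.1.2 j s' ∧ c₁.label = (⟨l.1.1, s'⟩, l.2) ∧
        c₂.label = (⟨j, M.init j⟩, l.2)

def NNFA.FullRun (M : NNFA) (I : Interp) (i : Fin M.n) (o₁ : I.Dom) (s₁ : M.St i)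
    (o₂ : I.Dom) (s₂ : M.St i) (t : RTree ((Σ j, M.St j) × I.Dom)) : Prop :=
  M.IsRun I t ∧ t.label = (⟨i, s₁⟩, o₁) ∧ ((⟨i, s₂⟩ : Σ j, M.St j), o₂) ∈ t.leaves ∧
  ∀ l ∈ t.leaves, l ≠ ((⟨i, s₂⟩ : Σ j, M.St j), o₂) → l.1.2 ∈ M.final l.1.1

end Paper
namespace Paper

/-- A plain NFA with transitions labeled by roles/tests. -/
structure NFA1 where
  St : Type
  trans : St → Role → St → Prop

/-- A witnessing sequence (trace) s₀o₀s₁o₁… for an NFA over an interpretation. -/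
def IsTrace (α : NFA1) (I : Interp) (w : List (α.St × I.Dom)) : Prop :=
  w ≠ [] ∧ List.Chain' (fun x y => ∃ σ, α.trans x.1 σ y.1 ∧ σ.sem I x.2 y.2) w

/-- The relation defined by the NFA from state u to state u'. -/
def NFARel (α : NFA1) (I : Interp) (u u' : α.St) (x y : I.Dom) : Prop :=
  ∃ w, IsTrace α I w ∧ w.head? = some (u, x) ∧ w.getLast? = some (u', y)

/-- The positions of the sequence considered in the decomposition: position 0,
the last position, and the interior positions where the element e is visited. -/
def visitIdx (α : NFA1) (I : Interp) (w : List (α.St × I.Dom)) (e : I.Dom) :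
    Set ℕ :=
  {i | i = 0 ∨ i = w.length - 1 ∨
    (0 < i ∧ i < w.length - 1 ∧ ∃ s, w[i]? = some (s, e))}

lemma slice_NFARel (α : NFA1) (I : Interp) (w : List (α.St × I.Dom))
    (hw : IsTrace α I w) (i j : ℕ) (hij : i ≤ j)
    (s₁ : α.St) (x₁ : I.Dom) (s₂ : α.St) (x₂ : I.Dom)
    (h1 : w[i]? = some (s₁, x₁)) (h2 : w[j]? = some (s₂, x₂)) :
    NFARel α I s₁ s₂ x₁ x₂ := by
  obtain ⟨hjlen, -⟩ := List.getElem?_eq_some_iff.mp h2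
  refine ⟨(w.drop i).take (j - i + 1), ⟨?_, ?_⟩, ?_, ?_⟩
  · have : ((w.drop i).take (j - i + 1)).length > 0 := by
      simp [List.length_take, List.length_drop]; omega
    exact List.ne_nil_of_length_pos this
  · exact hw.2.infix (((List.take_prefix _ _).isInfix).trans
      ((List.drop_suffix i w).isInfix))
  · rw [List.head?_eq_getElem?, List.getElem?_take]
    simp only [show (0 : ℕ) < j - i + 1 by omega, if_true]
    rw [List.getElem?_drop]
    simpa using h1
  · rw [List.getLast?_eq_getElem?]
    have hlen : ((w.drop i).take (j - i + 1)).length = j - i + 1 := by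
      simp [List.length_take, List.length_drop]; omega
    rw [hlen, List.getElem?_take]
    simp only [show j - i + 1 - 1 < j - i + 1 by omega, if_true]
    rw [List.getElem?_drop]
    have : i + (j - i + 1 - 1) = j := by omega
    rw [this]; exact h2

lemma distinct_aux (α : NFA1) (I : Interp) (F : Set α.St)
    (s₀ : α.St) (o o' : I.Dom) (w : List (α.St × I.Dom)) (hw : IsTrace α I w)
    (hhead : w.head? = some (s₀, o))
    (hlast : ∃ sf ∈ F, w.getLast? = some (sf, o'))
    (hmin : ∀ w', IsTrace α I w' → w'.head? = some (s₀, o) →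
      (∃ sf ∈ F, w'.getLast? = some (sf, o')) → w.length ≤ w'.length)
    (e : I.Dom) (i₁ i₂ : ℕ) (h₁ : 0 < i₁) (h₂ : i₂ < w.length - 1)
    (hlt : i₁ < i₂)
    (s₁ s₂ : α.St) (hg1 : w[i₁]? = some (s₁, e)) (hg2 : w[i₂]? = some (s₂, e)) :
    s₁ ≠ s₂ := by
  intro heq
  obtain ⟨hi1len, hw1⟩ := List.getElem?_eq_some_iff.mp hg1
  obtain ⟨hi2len, hw2⟩ := List.getElem?_eq_some_iff.mp hg2
  have hL : i₂ + 1 < w.length := by omega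
  set w' := w.take (i₁ + 1) ++ w.drop (i₂ + 1) with hw'
  have htake_last : (w.take (i₁ + 1)).getLast? = some (s₁, e) := by
    rw [List.getLast?_eq_getElem?]
    have hlt1 : (w.take (i₁ + 1)).length = i₁ + 1 := by
      simp [List.length_take]; omega
    rw [hlt1, List.getElem?_take]
    simp only [show i₁ + 1 - 1 < i₁ + 1 by omega, if_true]
    simpa using hg1
  have hdrop_head : (w.drop (i₂ + 1)).head? = some w[i₂ + 1] := by
    rw [List.head?_eq_getElem?, List.getElem?_drop]
    simp [List.getElem?_eq_getElem (by omega : i₂ + 1 + 0 < w.length)]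
  have htr : IsTrace α I w' := by
    constructor
    · have : (0:ℕ) < w'.length := by
        simp [hw', List.length_take, List.length_drop]; omega
      exact List.ne_nil_of_length_pos this
    · refine List.IsChain.append
        (hw.2.infix (List.take_prefix _ _).isInfix)
        (hw.2.infix (List.drop_suffix _ _).isInfix) ?_
      intro x hx y hy
      rw [htake_last] at hx
      rw [hdrop_head] at hy
      simp only [Option.mem_def, Option.some_inj] at hx hy
      subst hx; subst hy
      have := List.isChain_iff_getElem.mp hw.2 i₂ (by omega)
      rw [hw2] at this
      rw [heq]
      exact this
  have hhead' : w'.head? = some (s₀, o) := by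
    rw [hw', List.head?_append]
    have : (w.take (i₁ + 1)).head? = some (s₀, o) := by
      rw [List.head?_eq_getElem?, List.getElem?_take]
      simp only [show (0:ℕ) < i₁ + 1 by omega, if_true]
      rw [← List.head?_eq_getElem?]; exact hhead
    rw [this]; rfl
  have hlast' : ∃ sf ∈ F, w'.getLast? = some (sf, o') := by
    obtain ⟨sf, hsf, hlw⟩ := hlast
    refine ⟨sf, hsf, ?_⟩
    rw [hw', List.getLast?_append]
    have : (w.drop (i₂ + 1)).getLast? = some (sf, o') := by
      rw [List.getLast?_eq_getElem?, List.length_drop, List.getElem?_drop]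
      have he : i₂ + 1 + (w.length - (i₂ + 1) - 1) = w.length - 1 := by omega
      rw [he, ← List.getLast?_eq_getElem?]; exact hlw
    rw [this]; rfl
  have := hmin w' htr hhead' hlast'
  have hlen' : w'.length = (i₁ + 1) + (w.length - (i₂ + 1)) := by
    simp [hw', List.length_take, List.length_drop]; omega
  omega

/-- decomposition of a minimal accepting sequence through the
repeated visits to a fixed element e: the states at the interior visits of e are
pairwise distinct, and between any two consecutive considered positions the
corresponding relation of the automaton holds. -/
theorem minimal_trace_decomposition (α : NFA1) (I : Interp) (F : Set α.St)
    (s₀ : α.St) (o o' : I.Dom) (w : List (α.St × I.Dom)) (hw : IsTrace α I w)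
    (hhead : w.head? = some (s₀, o))
    (hlast : ∃ sf ∈ F, w.getLast? = some (sf, o'))
    (hmin : ∀ w', IsTrace α I w' → w'.head? = some (s₀, o) →
      (∃ sf ∈ F, w'.getLast? = some (sf, o')) → w.length ≤ w'.length)
    (e : I.Dom) :
    (∀ i₁ i₂ : ℕ,
      (0 < i₁ ∧ i₁ < w.length - 1) → (0 < i₂ ∧ i₂ < w.length - 1) → i₁ ≠ i₂ →
      ∀ s₁ s₂, w[i₁]? = some (s₁, e) → w[i₂]? = some (s₂, e) → s₁ ≠ s₂) ∧
    (∀ i₁ i₂ : ℕ, i₁ ∈ visitIdx α I w e → i₂ ∈ visitIdx α I w e → i₁ < i₂ →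
      (∀ k ∈ visitIdx α I w e, ¬ (i₁ < k ∧ k < i₂)) →
      ∀ s₁ x₁ s₂ x₂, w[i₁]? = some (s₁, x₁) → w[i₂]? = some (s₂, x₂) →
        NFARel α I s₁ s₂ x₁ x₂) := by
  constructor
  · intro i₁ i₂ hi₁ hi₂ hne s₁ s₂ hg1 hg2
    rcases lt_trichotomy i₁ i₂ with h | h | h
    · exact distinct_aux α I F s₀ o o' w hw hhead hlast hmin e i₁ i₂ hi₁.1 hi₂.2 h s₁ s₂ hg1 hg2
    · exact absurd h hne
    · exact (distinct_aux α I F s₀ o o' w hw hhead hlast hmin e i₂ i₁ hi₂.1 hi₁.2 h s₂ s₁ hg2 hg1).symm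
  · intro i₁ i₂ _ _ hlt _ s₁ x₁ s₂ x₂ hg1 hg2
    exact slice_NFARel α I w hw i₁ i₂ (le_of_lt hlt) s₁ x₁ s₂ x₂ hg1 hg2

end Paper
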